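/- Let γ: I → M be a Legendre curve with null normal in a 3-dimensional normal almost paracontact metric manifold M. Then α∘γ = ± g(N, φγ̇) ≠ 0, and the Cartan data of γ satisfy T = γ̇, N = −α(ξ ± φγ̇), W = (−1/(2α))(ξ ∓ φγ̇) and κ = α′/α ± β, where α, β denote the compositions with γ of 2α = Trace{X ↦ ∇_X ξ}, 2β = Trace{X ↦ φ∇_X ξ}, and α′ is the derivative of α∘γ. -/

import Mathlib

/-- The data, along a curve `γ : I → M`, of a 3-dimensional almost paracontact
metric manifold `(M, φ, ξ, η, g)`: the pullback tangent bundle is trivialized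
over a real vector space `V`; `g t`, `phi t`, `xi t` are the metric, the
structure tensor and the Reeb field at the point `γ t`, and `T t = γ̇(t)` is
the velocity of the curve.  The 1-form `η` is recovered as `η(v) = g v ξ`.
The axioms record: `η(ξ) = 1`, `φξ = 0`, `φ² = Id − η ⊗ ξ`,
`g(φv, φw) = −g(v,w) + η(v)η(w)`, symmetry of `g`, and that `g` has
signature `(2,1)` (an orthonormal basis with signs `(+,+,−)`). -/
structure APCMCurve (V : Type*) [AddCommGroup V] [Module ℝ V] where
  g : ℝ → V →ₗ[ℝ] V →ₗ[ℝ] ℝ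
  phi : ℝ → V →ₗ[ℝ] V
  xi : ℝ → V
  T : ℝ → V
  g_symm : ∀ t v w, g t v w = g t w v
  xi_unit : ∀ t, g t (xi t) (xi t) = 1
  phi_xi : ∀ t, phi t (xi t) = 0
  phi_sq : ∀ t v, phi t (phi t v) = v - g t v (xi t) • xi t
  compat : ∀ t v w, g t (phi t v) (phi t w) = -(g t v w) + g t v (xi t) * g t w (xi t)
  signature : ∀ t, ∃ e : Module.Basis (Fin 3) ℝ V,
    g t (e 0) (e 0) = 1 ∧ g t (e 1) (e 1) = 1 ∧ g t (e 2) (e 2) = -1 ∧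
    g t (e 0) (e 1) = 0 ∧ g t (e 0) (e 2) = 0 ∧ g t (e 1) (e 2) = 0

/-- The data, along a curve `γ`, of a 3-dimensional *normal* almost paracontact
metric manifold: in addition to `APCMCurve`, `D` is the covariant derivative
along `γ` (induced by the Levi-Civita connection `∇` of `g`), and
`a = α ∘ γ`, `b = β ∘ γ` are the compositions with `γ` of the structure
functions `α`, `β` of the normal structure (those with
`2α = Trace{X ↦ ∇_X ξ}`, `2β = Trace{X ↦ φ∇_X ξ}`), so that along `γ` one has
`∇_{γ̇} ξ = α(γ̇ − η(γ̇)ξ) + βφγ̇` (field `D_xi`) and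
`(∇_{γ̇} φ)A = β(g(γ̇,A)ξ − η(A)γ̇) + α(g(φγ̇,A)ξ − η(A)φγ̇)` for every vector
field `A` along `γ` (field `D_phi`).  `D` is additive, satisfies the Leibniz
rule and is metric-compatible. -/
structure NAPCMCurve (V : Type*) [AddCommGroup V] [Module ℝ V]
    extends APCMCurve V where
  D : (ℝ → V) → (ℝ → V)
  a : ℝ → ℝ
  b : ℝ → ℝ
  D_add : ∀ A B : ℝ → V, D (fun t => A t + B t) = fun t => D A t + D B t
  D_smul : ∀ (f : ℝ → ℝ) (A : ℝ → V) (t : ℝ), DifferentiableAt ℝ f t →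
    D (fun s => f s • A s) t = deriv f t • A t + f t • D A t
  D_metric : ∀ (A B : ℝ → V) (t : ℝ),
    HasDerivAt (fun s => g s (A s) (B s)) (g t (D A t) (B t) + g t (A t) (D B t)) t
  D_xi : ∀ t, D xi t = a t • (T t - g t (T t) (xi t) • xi t) + b t • phi t (T t)
  D_phi : ∀ (A : ℝ → V) (t : ℝ),
    D (fun s => phi s (A s)) t
      = b t • (g t (T t) (A t) • xi t - g t (A t) (xi t) • T t)
        + a t • (g t (phi t (T t)) (A t) • xi t - g t (A t) (xi t) • phi t (T t))
        + phi t (D A t)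

section Test
variable {V : Type*} [AddCommGroup V] [Module ℝ V] (M : NAPCMCurve V)

theorem etaphi' : ∀ t v, M.g t (M.phi t v) (M.xi t) = 0 := by
  intro t v
  have h1 := M.compat t (M.phi t v) (M.phi t v)
  rw [M.phi_sq t v] at h1
  have h2 := M.compat t v v
  have h3 := M.xi_unit t
  have h4 := M.g_symm t (M.xi t) v
  simp only [map_sub, map_smul, LinearMap.sub_apply, LinearMap.smul_apply, smul_eq_mul] at h1
  rw [h2, h3, h4] at h1
  have hsq : M.g t (M.phi t v) (M.xi t) * M.g t (M.phi t v) (M.xi t) = 0 := by nlinarith [h1]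
  exact mul_self_eq_zero.mp hsq

theorem gphi' : ∀ t v w, M.g t (M.phi t v) w = -(M.g t v (M.phi t w)) := by
  intro t v w
  have h1 := M.compat t v w
  have h := M.compat t v (M.phi t w)
  rw [M.phi_sq t w, etaphi' M t w] at h
  simp only [map_sub, map_smul, smul_eq_mul] at h
  rw [etaphi' M t v] at h
  linarith

theorem nondeg' : ∀ t (u : V), (∀ w, M.g t u w = 0) → u = 0 := by
  intro t u hu
  obtain ⟨e, h00, h11, h22, h01, h02, h12⟩ := M.signature t
  have hrep := e.sum_repr u
  rw [Fin.sum_univ_three] at hrep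
  have h0 := hu (e 0)
  have h1 := hu (e 1)
  have h2 := hu (e 2)
  rw [← hrep] at h0 h1 h2
  simp only [map_add, map_smul, LinearMap.add_apply, LinearMap.smul_apply, smul_eq_mul] at h0 h1 h2
  rw [M.g_symm t (e 1) (e 0), M.g_symm t (e 2) (e 0)] at h0
  rw [M.g_symm t (e 2) (e 1)] at h1
  rw [h00, h01, h02, h11, h12, h22] at *
  have hx : e.repr u 0 = 0 := by linarith
  have hy : e.repr u 1 = 0 := by linarith
  have hz : e.repr u 2 = 0 := by linarith
  rw [hx, hy, hz] at hrep
  simp at hrep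
  exact hrep.symm

theorem ortho_zero (t : ℝ) (hTT : M.g t (M.T t) (M.T t) = 1)
    (hTxi : M.g t (M.T t) (M.xi t) = 0)
    (u : V) (h1 : M.g t u (M.T t) = 0) (h2 : M.g t u (M.xi t) = 0)
    (h3 : M.g t u (M.phi t (M.T t)) = 0) : u = 0 := by
  obtain ⟨e, -⟩ := M.signature t
  haveI : FiniteDimensional ℝ V := Module.Finite.of_basis e
  have hrank : Module.finrank ℝ V = 3 := by
    rw [Module.finrank_eq_card_basis e]; simp
  have gPP : M.g t (M.phi t (M.T t)) (M.phi t (M.T t)) = -1 := by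
    rw [M.compat t, hTT, hTxi]; ring
  have gTP : M.g t (M.T t) (M.phi t (M.T t)) = 0 := by
    have ha := gphi' M t (M.T t) (M.T t)
    have hs := M.g_symm t (M.phi t (M.T t)) (M.T t)
    linarith
  have gxiP : M.g t (M.xi t) (M.phi t (M.T t)) = 0 := by
    rw [M.g_symm]; exact etaphi' M t (M.T t)
  set v : Fin 3 → V := ![M.T t, M.xi t, M.phi t (M.T t)] with hv
  have li : LinearIndependent ℝ v := by
    rw [Fintype.linearIndependent_iff]
    intro c hc
    rw [Fin.sum_univ_three] at hc
    simp only [hv, Matrix.cons_val_zero, Matrix.cons_val_one, Matrix.head_cons,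
      Matrix.cons_val_two, Matrix.tail_cons] at hc
    have key : ∀ w, M.g t (c 0 • M.T t + c 1 • M.xi t + c 2 • M.phi t (M.T t)) w
        = 0 := by intro w; rw [hc]; simp
    have k0 := key (M.T t)
    have k1 := key (M.xi t)
    have k2 := key (M.phi t (M.T t))
    simp only [map_add, map_smul, LinearMap.add_apply, LinearMap.smul_apply,
      smul_eq_mul] at k0 k1 k2
    rw [M.g_symm t (M.xi t) (M.T t)] at k0
    rw [M.g_symm t (M.phi t (M.T t)) (M.T t)] at k0
    rw [M.g_symm t (M.phi t (M.T t)) (M.xi t)] at k1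
    rw [hTT, hTxi, gTP, M.xi_unit, gxiP, gPP] at *
    intro i
    fin_cases i <;> simp_all
  have card : Fintype.card (Fin 3) = Module.finrank ℝ V := by simp [hrank]
  let b := basisOfLinearIndependentOfCardEqFinrank li card
  have hb : ∀ i, b i = v i := fun i => by
    simp [b, coe_basisOfLinearIndependentOfCardEqFinrank]
  have hall : ∀ w, M.g t u w = 0 := by
    intro w
    have hrep := b.sum_repr w
    rw [Fin.sum_univ_three] at hrep
    rw [← hrep]
    simp only [map_add, map_smul, smul_eq_mul, hb]
    simp only [hv, Matrix.cons_val_zero, Matrix.cons_val_one, Matrix.head_cons,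
      Matrix.cons_val_two, Matrix.tail_cons]
    rw [h1, h2, h3]; ring
  exact nondeg' M t u hall

end Test

set_option maxHeartbeats 1000000 in
/-- Let `γ` be a Legendre curve (`η(γ̇) = 0`) with null normal
(`g(γ̇,γ̇) = 1`, `∇_{γ̇}γ̇ ≠ 0`, `g(∇_{γ̇}γ̇,∇_{γ̇}γ̇) = 0`) in a 3-dimensional
normal almost paracontact metric manifold.  With the Cartan data `T = γ̇`,
`N = ∇_{γ̇}T`, `κ` with `∇_{γ̇}N = κN`, and `W` the field with `g(N,W) = 1`,
`g(W,W) = g(T,W) = 0`, one has `α = ±g(N,φγ̇) ≠ 0`, `T = γ̇`,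
`N = −α(ξ ± φγ̇)`, `W = (−1/(2α))(ξ ∓ φγ̇)` and `κ = α′/α ± β`. -/
theorem legendre_null_normal_cartan {V : Type*} [AddCommGroup V] [Module ℝ V]
    (M : NAPCMCurve V)
    (hunit : ∀ t, M.g t (M.T t) (M.T t) = 1)
    (hlegendre : ∀ t, M.g t (M.T t) (M.xi t) = 0)
    (hnongeo : ∀ t, M.D M.T t ≠ 0)
    (hnullnormal : ∀ t, M.g t (M.D M.T t) (M.D M.T t) = 0)
    (hadiff : Differentiable ℝ M.a)
    (N : ℝ → V) (hN : N = M.D M.T)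
    (κ : ℝ → ℝ) (hκ : ∀ t, M.D N t = κ t • N t)
    (W : ℝ → V)
    (hW1 : ∀ t, M.g t (N t) (W t) = 1)
    (hW2 : ∀ t, M.g t (W t) (W t) = 0)
    (hW3 : ∀ t, M.g t (M.T t) (W t) = 0) :
    ∀ t : ℝ, M.a t ≠ 0 ∧ ∃ s : ℝ, (s = 1 ∨ s = -1) ∧
      M.a t = s * M.g t (N t) (M.phi t (M.T t)) ∧
      N t = (-(M.a t)) • (M.xi t + s • M.phi t (M.T t)) ∧
      W t = (-1 / (2 * M.a t)) • (M.xi t - s • M.phi t (M.T t)) ∧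
      κ t = deriv M.a t / M.a t + s * M.b t := by
  -- product table, pointwise in t
  have gPP : ∀ t, M.g t (M.phi t (M.T t)) (M.phi t (M.T t)) = -1 := by
    intro t; rw [M.compat t, hunit t, hlegendre t]; ring
  have gTP : ∀ t, M.g t (M.T t) (M.phi t (M.T t)) = 0 := by
    intro t
    have ha := gphi' M t (M.T t) (M.T t)
    have hs := M.g_symm t (M.phi t (M.T t)) (M.T t)
    linarith
  have gxiP : ∀ t, M.g t (M.xi t) (M.phi t (M.T t)) = 0 := by
    intro t; rw [M.g_symm]; exact etaphi' M t (M.T t)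
  -- g(N,T) = 0
  have hNT : ∀ t, M.g t (N t) (M.T t) = 0 := by
    intro t
    have h := M.D_metric M.T M.T t
    have he : (fun s => M.g s (M.T s) (M.T s)) = fun _ => (1:ℝ) := funext hunit
    rw [he] at h
    have h0 := (hasDerivAt_const t (1:ℝ)).unique h
    have hs := M.g_symm t (M.T t) (M.D M.T t)
    rw [hN]; linarith
  -- Dξ
  have hDxi : ∀ t, M.D M.xi t = M.a t • M.T t + M.b t • M.phi t (M.T t) := by
    intro t
    rw [M.D_xi t, hlegendre t]
    module
  -- g(N,ξ) = -a
  have hNxi : ∀ t, M.g t (N t) (M.xi t) = -(M.a t) := by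
    intro t
    have h := M.D_metric M.T M.xi t
    have he : (fun s => M.g s (M.T s) (M.xi s)) = fun _ => (0:ℝ) := funext hlegendre
    rw [he] at h
    have h0 := (hasDerivAt_const t (0:ℝ)).unique h
    rw [hDxi t] at h0
    simp only [map_add, map_smul, smul_eq_mul] at h0
    rw [hunit t, gTP t] at h0
    rw [hN]; linarith
  intro t
  set c : ℝ := M.g t (N t) (M.phi t (M.T t)) with hc
  -- N = -a ξ - c P
  have hNexp : N t = (-(M.a t)) • M.xi t + (-c) • M.phi t (M.T t) := by
    have hu : N t - ((-(M.a t)) • M.xi t + (-c) • M.phi t (M.T t)) = 0 := by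
      apply ortho_zero M t (hunit t) (hlegendre t)
      · simp only [map_sub, map_add, map_smul, LinearMap.sub_apply, LinearMap.add_apply,
          LinearMap.smul_apply, smul_eq_mul]
        rw [hNT t, M.g_symm t (M.xi t) (M.T t), hlegendre t,
          M.g_symm t (M.phi t (M.T t)) (M.T t), gTP t]
        ring
      · simp only [map_sub, map_add, map_smul, LinearMap.sub_apply, LinearMap.add_apply,
          LinearMap.smul_apply, smul_eq_mul]
        rw [hNxi t, M.xi_unit t, M.g_symm t (M.phi t (M.T t)) (M.xi t), gxiP t]
        ring
      · simp only [map_sub, map_add, map_smul, LinearMap.sub_apply, LinearMap.add_apply,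
          LinearMap.smul_apply, smul_eq_mul]
        rw [← hc, gxiP t, gPP t]
        ring
    exact sub_eq_zero.mp hu
  -- a² = c²
  have hNN0 : M.g t (N t) (N t) = 0 := by rw [hN]; exact hnullnormal t
  nth_rewrite 1 [hNexp] at hNN0
  nth_rewrite 1 [hNexp] at hNN0
  simp only [map_add, map_smul, LinearMap.add_apply, LinearMap.smul_apply,
    smul_eq_mul] at hNN0
  rw [M.xi_unit t, gxiP t, M.g_symm t (M.phi t (M.T t)) (M.xi t), gxiP t, gPP t] at hNN0
  have hac : M.a t * M.a t = c * c := by nlinarith [hNN0]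
  -- a ≠ 0
  have ha : M.a t ≠ 0 := by
    intro h0
    have hc0 : c = 0 := by nlinarith [hac]
    apply hnongeo t
    have hz : N t = 0 := by rw [hNexp, h0, hc0]; simp
    rw [hN] at hz; exact hz
  refine ⟨ha, ?_⟩
  -- choose the sign
  have hcases : M.a t = c ∨ M.a t = -c := by
    rcases mul_eq_zero.mp (show (M.a t - c) * (M.a t + c) = 0 by nlinarith [hac]) with h | h
    · left; linarith
    · right; linarith
  obtain ⟨s, hs1, hsc⟩ : ∃ s : ℝ, (s = 1 ∨ s = -1) ∧ M.a t = s * c := by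
    rcases hcases with h | h
    · exact ⟨1, Or.inl rfl, by linarith⟩
    · exact ⟨-1, Or.inr rfl, by linarith⟩
  have hss : s * s = 1 := by rcases hs1 with h | h <;> rw [h] <;> norm_num
  have hcs : c = s * M.a t := by rcases hs1 with h | h <;> rw [h] at hsc ⊢ <;> linarith
  refine ⟨s, hs1, hsc, ?_, ?_, ?_⟩
  · -- N = -a (ξ + s P)
    rw [hNexp, hcs]
    module
  · -- W
    set q : ℝ := M.g t (W t) (M.xi t) with hq
    set r : ℝ := -(M.g t (W t) (M.phi t (M.T t))) with hr
    have hWexp : W t = q • M.xi t + r • M.phi t (M.T t) := by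
      have hu : W t - (q • M.xi t + r • M.phi t (M.T t)) = 0 := by
        apply ortho_zero M t (hunit t) (hlegendre t)
        · simp only [map_sub, map_add, map_smul, LinearMap.sub_apply, LinearMap.add_apply,
            LinearMap.smul_apply, smul_eq_mul]
          rw [M.g_symm t (W t) (M.T t), hW3 t, M.g_symm t (M.xi t) (M.T t), hlegendre t,
            M.g_symm t (M.phi t (M.T t)) (M.T t), gTP t]
          ring
        · simp only [map_sub, map_add, map_smul, LinearMap.sub_apply, LinearMap.add_apply,
            LinearMap.smul_apply, smul_eq_mul]
          rw [← hq, M.xi_unit t, M.g_symm t (M.phi t (M.T t)) (M.xi t), gxiP t]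
          ring
        · simp only [map_sub, map_add, map_smul, LinearMap.sub_apply, LinearMap.add_apply,
            LinearMap.smul_apply, smul_eq_mul]
          rw [show M.g t (W t) (M.phi t (M.T t)) = -r by rw [hr]; ring,
            gxiP t, gPP t]
          ring
      exact sub_eq_zero.mp hu
    -- g(W,W) = 0 :  q² = r²
    have hW2' := hW2 t
    nth_rewrite 1 [hWexp] at hW2'
    nth_rewrite 1 [hWexp] at hW2'
    simp only [map_add, map_smul, LinearMap.add_apply, LinearMap.smul_apply,
      smul_eq_mul] at hW2'
    rw [M.xi_unit t, gxiP t, M.g_symm t (M.phi t (M.T t)) (M.xi t), gxiP t, gPP t] at hW2'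
    have hqr : q * q = r * r := by nlinarith [hW2']
    -- g(N,W) = 1 : -a q + c r = 1
    have hW1' := hW1 t
    rw [hNexp, hWexp] at hW1'
    simp only [map_add, map_smul, LinearMap.add_apply, LinearMap.smul_apply,
      smul_eq_mul] at hW1'
    rw [M.xi_unit t, gxiP t, M.g_symm t (M.phi t (M.T t)) (M.xi t), gxiP t, gPP t] at hW1'
    have hNW : -(M.a t) * q + c * r = 1 := by nlinarith [hW1']
    rw [hcs] at hNW
    -- solve for q, r
    have hqr' : q = r ∨ q = -r := by
      rcases mul_eq_zero.mp (show (q - r) * (q + r) = 0 by linear_combination hqr) with h | h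
      · left; linarith
      · right; linarith
    have hqv : q = -1 / (2 * M.a t) ∧ r = s / (2 * M.a t) := by
      rcases hs1 with h | h <;> rcases hqr' with h2 | h2 <;>
          rw [h] at hNW ⊢ <;> rw [h2] at hNW ⊢
      · exfalso; nlinarith [hNW]
      · constructor <;> (field_simp; linarith [hNW])
      · constructor <;> (field_simp; linarith [hNW])
      · exfalso; nlinarith [hNW]
    rw [hWexp, hqv.1, hqv.2]
    module
  · -- κ
    have h := M.D_metric N M.xi t
    have he : (fun u => M.g u (N u) (M.xi u)) = fun u => -(M.a u) := funext hNxi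
    rw [he] at h
    have h2 : HasDerivAt (fun u => -(M.a u)) (-(deriv M.a t)) t :=
      ((hadiff t).hasDerivAt).neg
    have h0 := h2.unique h
    rw [hκ t, hDxi t] at h0
    simp only [map_add, map_smul, LinearMap.smul_apply, smul_eq_mul] at h0
    rw [hNxi t, hNT t, ← hc] at h0
    rw [hcs] at h0
    field_simp
    linear_combination h0
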